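/- Let Ω₀ ∈ ℝ^{pM×pM} be symmetric positive definite with C_Σ = ‖Ω₀^{-1}‖_∞^(M), let d ≥ 1 be an integer, and let Δ ∈ ℝ^{pM×pM} be a symmetric block matrix such that for every row index j, at most d of the blocks Δ_jl (1 ≤ l ≤ p) are nonzero, and suppose ‖Δ‖_max^(M) < 1/(3 C_Σ d). Then Ω₀ + Δ is invertible, and the remainder R(Δ) = (Ω₀ + Δ)^{-1} − Ω₀^{-1} + Ω₀^{-1} Δ Ω₀^{-1} satisfies R(Δ) = Ω₀^{-1} Δ Ω₀^{-1} Δ J Ω₀^{-1}, where J = Σ_{s=0}^∞ (−1)^s (Ω₀^{-1} Δ)^s, and moreover ‖R(Δ)‖_max^(M) ≤ (3/2) C_Σ³ d (‖Δ‖_max^(M))². -/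

import Mathlib

open scoped BigOperators
open Matrix

noncomputable section

namespace JF

/-- Frobenius norm of a real matrix. -/
def frobG {α β : Type*} [Fintype α] [Fintype β] (B : Matrix α β ℝ) : ℝ :=
  Real.sqrt (∑ a, ∑ b, B a b ^ 2)

/-- The `(j,l)` block (an `M × M` matrix) of a `pM × pM` matrix. -/
def blk {p M : ℕ} (A : Matrix (Fin p × Fin M) (Fin p × Fin M) ℝ) (j l : Fin p) :
    Matrix (Fin M) (Fin M) ℝ := fun a b => A (j, a) (l, b)

/-- `M`-block version of the ℓ∞ matrix norm: `max_j Σ_l ‖A_{jl}‖_F`. -/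
def blockInfty {p M : ℕ} (A : Matrix (Fin p × Fin M) (Fin p × Fin M) ℝ) : ℝ :=
  ⨆ j, ∑ l, frobG (blk A j l)

/-- `M`-block version of the max (elementwise ℓ∞) norm: `max_{j,l} ‖A_{jl}‖_F`. -/
def blockMax {p M : ℕ} (A : Matrix (Fin p × Fin M) (Fin p × Fin M) ℝ) : ℝ :=
  ⨆ j, ⨆ l, frobG (blk A j l)

/-- `M`-block version of the ℓ₁ matrix norm: `max_l Σ_j ‖A_{jl}‖_F`. -/
def blockOne {p M : ℕ} (A : Matrix (Fin p × Fin M) (Fin p × Fin M) ℝ) : ℝ :=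
  ⨆ l, ∑ j, frobG (blk A j l)

/-- Generalized block ℓ∞ norm, with block-rows/columns indexed by an arbitrary
finite type `ι` and blocks of shape `α × α`. -/
def bInftyG {ι α : Type*} [Fintype ι] [Fintype α] (A : Matrix (ι × α) (ι × α) ℝ) : ℝ :=
  ⨆ j, ∑ l, frobG (fun a b => A (j, a) (l, b))

/-- Entrywise ℓ₁ norm of a matrix. -/
def ell1 {α β : Type*} [Fintype α] [Fintype β] (A : Matrix α β ℝ) : ℝ :=
  ∑ i, ∑ j, |A i j|

/-- `j`-th block of a vector in `ℝ^{pM}`. -/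
def vblk {p M : ℕ} (u : Fin p × Fin M → ℝ) (j : Fin p) : Fin M → ℝ := fun a => u (j, a)

/-- Euclidean norm of a vector. -/
def vnorm2 {M : ℕ} (v : Fin M → ℝ) : ℝ := Real.sqrt (∑ a, v a ^ 2)

/-- Block max norm of a vector in `ℝ^{pM}`: `max_j ‖u_j‖_2`. -/
def vBlockMax {p M : ℕ} (u : Fin p × Fin M → ℝ) : ℝ := ⨆ j, vnorm2 (vblk u j)

/-- `j`-th block of a `pM × M` vertically stacked block matrix. -/
def sblk {p M : ℕ} (x : Matrix (Fin p × Fin M) (Fin M) ℝ) (j : Fin p) :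
    Matrix (Fin M) (Fin M) ℝ := fun a b => x (j, a) b

/-- `max_j ‖x_j‖_F` for a `pM × M` stacked block matrix. -/
def stackMax {p M : ℕ} (x : Matrix (Fin p × Fin M) (Fin M) ℝ) : ℝ :=
  ⨆ j, frobG (sblk x j)

/-- `Σ_j ‖x_j‖_F` for a `pM × M` stacked block matrix. -/
def stackOne {p M : ℕ} (x : Matrix (Fin p × Fin M) (Fin M) ℝ) : ℝ :=
  ∑ j, frobG (sblk x j)

/-- The block matrix `Ω` with blocks `Ω_{jl} = θ_{jl} Γ_{jl}`. -/
def mkOmega {p M : ℕ} (Θ : Matrix (Fin p) (Fin p) ℝ)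
    (G : Matrix (Fin p × Fin M) (Fin p × Fin M) ℝ) :
    Matrix (Fin p × Fin M) (Fin p × Fin M) ℝ :=
  fun x y => Θ x.1 y.1 * G x y

/-- Feasible parameters `(Θ, Γ)` for the joint functional graphical model:
`Θ` symmetric with nonnegative off-diagonal and positive diagonal entries,
each `Γ^{(k)}` block-symmetric (`Γ_{lj} = Γ_{jl}ᵀ`), and every
`Ω^{(k)} = (θ_{jl} Γ^{(k)}_{jl})` symmetric positive definite. -/
def Feasible {p M K : ℕ} (Θ : Matrix (Fin p) (Fin p) ℝ)
    (Γ : Fin K → Matrix (Fin p × Fin M) (Fin p × Fin M) ℝ) : Prop :=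
  Θ.IsSymm ∧ (∀ j l : Fin p, j ≠ l → 0 ≤ Θ j l) ∧ (∀ j : Fin p, 0 < Θ j j) ∧
    (∀ (k : Fin K) (j l : Fin p), blk (Γ k) l j = (blk (Γ k) j l)ᵀ) ∧
    (∀ k : Fin K, (mkOmega Θ (Γ k)).PosDef)

/-- The negative log-likelihood part `Σ_k [tr(Σ̂^{(k)} Ω^{(k)}) − log det Ω^{(k)}]`. -/
def loss {p M K : ℕ}
    (Sig Ω : Fin K → Matrix (Fin p × Fin M) (Fin p × Fin M) ℝ) : ℝ :=
  ∑ k, (Matrix.trace (Sig k * Ω k) - Real.log (Ω k).det)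

/-- `Σ_{j≠l} θ_{jl}`. -/
def pen1 {p : ℕ} (Θ : Matrix (Fin p) (Fin p) ℝ) : ℝ :=
  ∑ q ∈ (Finset.univ : Finset (Fin p)).offDiag, Θ q.1 q.2

/-- `Σ_{j≠l} Σ_k ‖Γ^{(k)}_{jl}‖_F`. -/
def pen2 {p M K : ℕ} (Γ : Fin K → Matrix (Fin p × Fin M) (Fin p × Fin M) ℝ) : ℝ :=
  ∑ q ∈ (Finset.univ : Finset (Fin p)).offDiag, ∑ k, frobG (blk (Γ k) q.1 q.2)

/-- The objective `Q₁(λ₁, λ₂, Θ, Γ)`. -/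
def Q1 {p M K : ℕ} (Sig : Fin K → Matrix (Fin p × Fin M) (Fin p × Fin M) ℝ)
    (l1 l2 : ℝ) (Θ : Matrix (Fin p) (Fin p) ℝ)
    (Γ : Fin K → Matrix (Fin p × Fin M) (Fin p × Fin M) ℝ) : ℝ :=
  loss Sig (fun k => mkOmega Θ (Γ k)) + l1 * pen1 Θ + l2 * pen2 Γ

/-- The objective `Q₂(λ, Θ, Γ)`. -/
def Q2 {p M K : ℕ} (Sig : Fin K → Matrix (Fin p × Fin M) (Fin p × Fin M) ℝ)
    (lam : ℝ) (Θ : Matrix (Fin p) (Fin p) ℝ)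
    (Γ : Fin K → Matrix (Fin p × Fin M) (Fin p × Fin M) ℝ) : ℝ :=
  loss Sig (fun k => mkOmega Θ (Γ k)) + pen1 Θ + lam * pen2 Γ

/-- The objective `Q₃(λ, Ω)`. -/
def Q3 {p M K : ℕ} (Sig : Fin K → Matrix (Fin p × Fin M) (Fin p × Fin M) ℝ)
    (lam : ℝ) (Ω : Fin K → Matrix (Fin p × Fin M) (Fin p × Fin M) ℝ) : ℝ :=
  loss Sig Ω + lam * ∑ q ∈ (Finset.univ : Finset (Fin p)).offDiag,
    Real.sqrt (∑ k, frobG (blk (Ω k) q.1 q.2))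

/-- The ℓ₁ distance `‖Θ − Θ'‖₁ + Σ_k ‖Γ^{(k)} − Γ'^{(k)}‖₁` between parameter pairs. -/
def paramDist {p M K : ℕ} (Θ Θ' : Matrix (Fin p) (Fin p) ℝ)
    (Γ Γ' : Fin K → Matrix (Fin p × Fin M) (Fin p × Fin M) ℝ) : ℝ :=
  ell1 (Θ - Θ') + ∑ k, ell1 (Γ k - Γ' k)

/-- `(Θ̂, Γ̂)` is a local minimizer of `Q₁(λ₁, λ₂, ·, ·)` (parameters restricted to
`θ_{jj} = 1`). -/
def IsLocalMinQ1 {p M K : ℕ}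
    (Sig : Fin K → Matrix (Fin p × Fin M) (Fin p × Fin M) ℝ)
    (l1 l2 : ℝ) (Θh : Matrix (Fin p) (Fin p) ℝ)
    (Γh : Fin K → Matrix (Fin p × Fin M) (Fin p × Fin M) ℝ) : Prop :=
  (Feasible Θh Γh ∧ ∀ j, Θh j j = 1) ∧
    ∃ δ > 0, ∀ Θ Γ, Feasible Θ Γ → (∀ j, Θ j j = 1) →
      paramDist Θ Θh Γ Γh < δ → Q1 Sig l1 l2 Θh Γh ≤ Q1 Sig l1 l2 Θ Γ

/-- `(Θ̂, Γ̂)` is a local minimizer of `Q₂(λ, ·, ·)` over the full parameter space. -/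
def IsLocalMinQ2 {p M K : ℕ}
    (Sig : Fin K → Matrix (Fin p × Fin M) (Fin p × Fin M) ℝ)
    (lam : ℝ) (Θh : Matrix (Fin p) (Fin p) ℝ)
    (Γh : Fin K → Matrix (Fin p × Fin M) (Fin p × Fin M) ℝ) : Prop :=
  Feasible Θh Γh ∧
    ∃ δ > 0, ∀ Θ Γ, Feasible Θ Γ →
      paramDist Θ Θh Γ Γh < δ → Q2 Sig lam Θh Γh ≤ Q2 Sig lam Θ Γ

/-- `Ω̂` is a local minimizer of `Q₃(λ, ·)` over `K`-tuples of symmetric positive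
definite matrices. -/
def IsLocalMinQ3 {p M K : ℕ}
    (Sig : Fin K → Matrix (Fin p × Fin M) (Fin p × Fin M) ℝ)
    (lam : ℝ) (Ωh : Fin K → Matrix (Fin p × Fin M) (Fin p × Fin M) ℝ) : Prop :=
  (∀ k, (Ωh k).PosDef) ∧
    ∃ δ > 0, ∀ Ω : Fin K → Matrix (Fin p × Fin M) (Fin p × Fin M) ℝ,
      (∀ k, (Ω k).PosDef) →
      (∑ k, ell1 (Ω k - Ωh k)) < δ → Q3 Sig lam Ωh ≤ Q3 Sig lam Ω


section FrobAux
attribute [local instance] Matrix.frobeniusNormedAddCommGroup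

variable {α β γ : Type*} [Fintype α] [Fintype β] [Fintype γ]

lemma frobG_eq_norm (B : Matrix α β ℝ) : frobG B = ‖B‖ := by
  rw [Matrix.frobenius_norm_def, frobG, Real.sqrt_eq_rpow]
  congr 1
  refine Finset.sum_congr rfl fun a _ => Finset.sum_congr rfl fun b _ => ?_
  rw [Real.rpow_two, Real.norm_eq_abs, sq_abs]

lemma frobG_nonneg (B : Matrix α β ℝ) : 0 ≤ frobG B := Real.sqrt_nonneg _

lemma frobG_zero : frobG (0 : Matrix α β ℝ) = 0 := by
  rw [frobG_eq_norm, norm_zero]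

lemma frobG_neg (B : Matrix α β ℝ) : frobG (-B) = frobG B := by
  rw [frobG_eq_norm, frobG_eq_norm, norm_neg]

lemma frobG_transpose (B : Matrix α β ℝ) : frobG Bᵀ = frobG B := by
  rw [frobG_eq_norm, frobG_eq_norm, Matrix.frobenius_norm_transpose]

lemma frobG_sum_le {ι : Type*} (s : Finset ι) (f : ι → Matrix α β ℝ) :
    frobG (∑ i ∈ s, f i) ≤ ∑ i ∈ s, frobG (f i) := by
  simp only [frobG_eq_norm]; exact norm_sum_le _ _

lemma frobG_mul_le (U : Matrix α β ℝ) (V : Matrix β γ ℝ) :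
    frobG (U * V) ≤ frobG U * frobG V := by
  simp only [frobG_eq_norm]; exact Matrix.frobenius_norm_mul U V

lemma abs_entry_le_frobG (B : Matrix α β ℝ) (a : α) (b : β) : |B a b| ≤ frobG B := by
  rw [← Real.sqrt_sq_eq_abs, frobG]
  apply Real.sqrt_le_sqrt
  calc B a b ^ 2 ≤ ∑ b', B a b' ^ 2 :=
        Finset.single_le_sum (f := fun b' => B a b' ^ 2) (fun i _ => sq_nonneg _) (Finset.mem_univ b)
    _ ≤ ∑ a', ∑ b', B a' b' ^ 2 :=
        Finset.single_le_sum (f := fun a' => ∑ b', B a' b' ^ 2)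
          (fun i _ => Finset.sum_nonneg fun _ _ => sq_nonneg _) (Finset.mem_univ a)

end FrobAux

lemma frobG_continuous {α β : Type*} [Fintype α] [Fintype β] :
    Continuous (frobG : Matrix α β ℝ → ℝ) := by
  apply Real.continuous_sqrt.comp
  exact continuous_finset_sum _ fun a _ =>
    continuous_finset_sum _ fun b _ => (continuous_id.matrix_elem a b).pow 2


variable {p M : ℕ}

lemma blk_mul (U V : Matrix (Fin p × Fin M) (Fin p × Fin M) ℝ) (j l : Fin p) :
    blk (U * V) j l = ∑ m, blk U j m * blk V m l := by
  ext a b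
  simp only [blk, Matrix.mul_apply, Finset.sum_apply, Matrix.sum_apply]
  exact Fintype.sum_prod_type _

lemma blk_transpose_of_symm {A : Matrix (Fin p × Fin M) (Fin p × Fin M) ℝ}
    (h : Aᵀ = A) (j l : Fin p) : blk A j l = (blk A l j)ᵀ := by
  ext a b
  have := congrFun (congrFun h (j, a)) (l, b)
  simp only [Matrix.transpose_apply] at this
  simp only [blk, Matrix.transpose_apply]
  exact this.symm

section Sup
variable [Nonempty (Fin p)]

lemma sum_row_le_blockInfty (A : Matrix (Fin p × Fin M) (Fin p × Fin M) ℝ) (j : Fin p) :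
    ∑ l, frobG (blk A j l) ≤ blockInfty A :=
  le_ciSup (f := fun j => ∑ l, frobG (blk A j l)) (Set.Finite.bddAbove (Set.finite_range _)) j

lemma sum_col_le_blockOne (A : Matrix (Fin p × Fin M) (Fin p × Fin M) ℝ) (l : Fin p) :
    ∑ j, frobG (blk A j l) ≤ blockOne A :=
  le_ciSup (f := fun l => ∑ j, frobG (blk A j l)) (Set.Finite.bddAbove (Set.finite_range _)) l

lemma frob_le_blockMax (A : Matrix (Fin p × Fin M) (Fin p × Fin M) ℝ) (j l : Fin p) :
    frobG (blk A j l) ≤ blockMax A := by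
  refine le_trans (le_ciSup (f := fun l => frobG (blk A j l)) (Set.Finite.bddAbove (Set.finite_range _)) l) ?_
  exact le_ciSup (f := fun j => ⨆ l, frobG (blk A j l))
    (Set.Finite.bddAbove (Set.finite_range _)) j

lemma blockInfty_le {A : Matrix (Fin p × Fin M) (Fin p × Fin M) ℝ} {c : ℝ}
    (h : ∀ j, ∑ l, frobG (blk A j l) ≤ c) : blockInfty A ≤ c := ciSup_le h

lemma blockOne_le {A : Matrix (Fin p × Fin M) (Fin p × Fin M) ℝ} {c : ℝ}
    (h : ∀ l, ∑ j, frobG (blk A j l) ≤ c) : blockOne A ≤ c := ciSup_le h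

lemma blockMax_le {A : Matrix (Fin p × Fin M) (Fin p × Fin M) ℝ} {c : ℝ}
    (h : ∀ j l, frobG (blk A j l) ≤ c) : blockMax A ≤ c :=
  ciSup_le fun j => ciSup_le (h j)

lemma blockMax_nonneg (A : Matrix (Fin p × Fin M) (Fin p × Fin M) ℝ) : 0 ≤ blockMax A := by
  obtain ⟨j⟩ := (inferInstance : Nonempty (Fin p))
  exact le_trans (frobG_nonneg _) (frob_le_blockMax A j j)

lemma blockInfty_nonneg (A : Matrix (Fin p × Fin M) (Fin p × Fin M) ℝ) : 0 ≤ blockInfty A := by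
  obtain ⟨j⟩ := (inferInstance : Nonempty (Fin p))
  exact le_trans (Finset.sum_nonneg fun _ _ => frobG_nonneg _) (sum_row_le_blockInfty A j)

lemma blockOne_nonneg (A : Matrix (Fin p × Fin M) (Fin p × Fin M) ℝ) : 0 ≤ blockOne A := by
  obtain ⟨l⟩ := (inferInstance : Nonempty (Fin p))
  exact le_trans (Finset.sum_nonneg fun _ _ => frobG_nonneg _) (sum_col_le_blockOne A l)

lemma frob_le_blockInfty (A : Matrix (Fin p × Fin M) (Fin p × Fin M) ℝ) (j l : Fin p) :
    frobG (blk A j l) ≤ blockInfty A :=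
  le_trans (Finset.single_le_sum (f := fun l => frobG (blk A j l))
    (fun _ _ => frobG_nonneg _) (Finset.mem_univ l)) (sum_row_le_blockInfty A j)

lemma frob_le_blockOne (A : Matrix (Fin p × Fin M) (Fin p × Fin M) ℝ) (j l : Fin p) :
    frobG (blk A j l) ≤ blockOne A :=
  le_trans (Finset.single_le_sum (f := fun j => frobG (blk A j l))
    (fun _ _ => frobG_nonneg _) (Finset.mem_univ j)) (sum_col_le_blockOne A l)

lemma abs_entry_le_blockInfty (A : Matrix (Fin p × Fin M) (Fin p × Fin M) ℝ)
    (q q' : Fin p × Fin M) : |A q q'| ≤ blockInfty A :=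
  le_trans (abs_entry_le_frobG (blk A q.1 q'.1) q.2 q'.2) (frob_le_blockInfty A q.1 q'.1)

lemma blockOne_eq_blockInfty {A : Matrix (Fin p × Fin M) (Fin p × Fin M) ℝ}
    (h : Aᵀ = A) : blockOne A = blockInfty A := by
  unfold blockOne blockInfty
  congr 1
  funext l
  refine Finset.sum_congr rfl fun j _ => ?_
  rw [blk_transpose_of_symm h j l, frobG_transpose]

lemma blockInfty_neg (A : Matrix (Fin p × Fin M) (Fin p × Fin M) ℝ) :
    blockInfty (-A) = blockInfty A := by
  unfold blockInfty
  congr 1; funext j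
  refine Finset.sum_congr rfl fun l _ => ?_
  have : blk (-A) j l = -(blk A j l) := rfl
  rw [this, frobG_neg]

lemma blockOne_neg (A : Matrix (Fin p × Fin M) (Fin p × Fin M) ℝ) :
    blockOne (-A) = blockOne A := by
  unfold blockOne
  congr 1; funext l
  refine Finset.sum_congr rfl fun j _ => ?_
  have : blk (-A) j l = -(blk A j l) := rfl
  rw [this, frobG_neg]

lemma frob_blk_mul_le (U V : Matrix (Fin p × Fin M) (Fin p × Fin M) ℝ) (j l : Fin p) :
    frobG (blk (U * V) j l) ≤ ∑ m, frobG (blk U j m) * frobG (blk V m l) := by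
  rw [blk_mul]
  exact (frobG_sum_le _ _).trans (Finset.sum_le_sum fun m _ => frobG_mul_le _ _)

lemma blockInfty_mul_le (U V : Matrix (Fin p × Fin M) (Fin p × Fin M) ℝ) :
    blockInfty (U * V) ≤ blockInfty U * blockInfty V := by
  apply blockInfty_le
  intro j
  calc ∑ l, frobG (blk (U * V) j l)
      ≤ ∑ l, ∑ m, frobG (blk U j m) * frobG (blk V m l) :=
        Finset.sum_le_sum fun l _ => frob_blk_mul_le U V j l
    _ = ∑ m, frobG (blk U j m) * ∑ l, frobG (blk V m l) := by
        rw [Finset.sum_comm]; simp [Finset.mul_sum]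
    _ ≤ ∑ m, frobG (blk U j m) * blockInfty V :=
        Finset.sum_le_sum fun m _ =>
          mul_le_mul_of_nonneg_left (sum_row_le_blockInfty V m) (frobG_nonneg _)
    _ = (∑ m, frobG (blk U j m)) * blockInfty V := (Finset.sum_mul _ _ _).symm
    _ ≤ blockInfty U * blockInfty V :=
        mul_le_mul_of_nonneg_right (sum_row_le_blockInfty U j) (blockInfty_nonneg V)

lemma blockOne_mul_le (U V : Matrix (Fin p × Fin M) (Fin p × Fin M) ℝ) :
    blockOne (U * V) ≤ blockOne U * blockOne V := by
  apply blockOne_le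
  intro l
  calc ∑ j, frobG (blk (U * V) j l)
      ≤ ∑ j, ∑ m, frobG (blk U j m) * frobG (blk V m l) :=
        Finset.sum_le_sum fun j _ => frob_blk_mul_le U V j l
    _ = ∑ m, (∑ j, frobG (blk U j m)) * frobG (blk V m l) := by
        rw [Finset.sum_comm]; simp [Finset.sum_mul]
    _ ≤ ∑ m, blockOne U * frobG (blk V m l) :=
        Finset.sum_le_sum fun m _ =>
          mul_le_mul_of_nonneg_right (sum_col_le_blockOne U m) (frobG_nonneg _)
    _ = blockOne U * ∑ m, frobG (blk V m l) := (Finset.mul_sum _ _ _).symm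
    _ ≤ blockOne U * blockOne V :=
        mul_le_mul_of_nonneg_left (sum_col_le_blockOne V l) (blockOne_nonneg U)

lemma blockMax_mul_le_left (U V : Matrix (Fin p × Fin M) (Fin p × Fin M) ℝ) :
    blockMax (U * V) ≤ blockInfty U * blockMax V := by
  apply blockMax_le
  intro j l
  calc frobG (blk (U * V) j l)
      ≤ ∑ m, frobG (blk U j m) * frobG (blk V m l) := frob_blk_mul_le U V j l
    _ ≤ ∑ m, frobG (blk U j m) * blockMax V :=
        Finset.sum_le_sum fun m _ =>
          mul_le_mul_of_nonneg_left (frob_le_blockMax V m l) (frobG_nonneg _)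
    _ = (∑ m, frobG (blk U j m)) * blockMax V := (Finset.sum_mul _ _ _).symm
    _ ≤ blockInfty U * blockMax V :=
        mul_le_mul_of_nonneg_right (sum_row_le_blockInfty U j) (blockMax_nonneg V)

lemma blockMax_mul_le_right (U V : Matrix (Fin p × Fin M) (Fin p × Fin M) ℝ) :
    blockMax (U * V) ≤ blockMax U * blockOne V := by
  apply blockMax_le
  intro j l
  calc frobG (blk (U * V) j l)
      ≤ ∑ m, frobG (blk U j m) * frobG (blk V m l) := frob_blk_mul_le U V j l
    _ ≤ ∑ m, blockMax U * frobG (blk V m l) :=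
        Finset.sum_le_sum fun m _ =>
          mul_le_mul_of_nonneg_right (frob_le_blockMax U j m) (frobG_nonneg _)
    _ = blockMax U * ∑ m, frobG (blk V m l) := (Finset.mul_sum _ _ _).symm
    _ ≤ blockMax U * blockOne V :=
        mul_le_mul_of_nonneg_left (sum_col_le_blockOne V l) (blockMax_nonneg U)

lemma sum_row_le_of_sparse {A : Matrix (Fin p × Fin M) (Fin p × Fin M) ℝ} {d : ℕ}
    (hA : ∀ j : Fin p, {l : Fin p | blk A j l ≠ 0}.ncard ≤ d) (j : Fin p) :
    ∑ l, frobG (blk A j l) ≤ (d : ℝ) * blockMax A := by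
  classical
  set S : Finset (Fin p) := Finset.univ.filter (fun l => blk A j l ≠ 0) with hS
  have hsum : ∑ l, frobG (blk A j l) = ∑ l ∈ S, frobG (blk A j l) := by
    symm
    apply Finset.sum_subset (Finset.subset_univ S)
    intro l _ hl
    simp only [hS, Finset.mem_filter, Finset.mem_univ, true_and, not_not] at hl
    rw [hl, frobG_zero]
  have hcard : (S.card : ℝ) ≤ (d : ℝ) := by
    have : (↑S : Set (Fin p)).ncard ≤ d := by
      convert hA j using 2
      ext l; simp [hS]
    rw [Set.ncard_coe_finset] at this
    exact_mod_cast this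
  rw [hsum]
  calc ∑ l ∈ S, frobG (blk A j l) ≤ ∑ _l ∈ S, blockMax A :=
        Finset.sum_le_sum fun l _ => frob_le_blockMax A j l
    _ = (S.card : ℝ) * blockMax A := by rw [Finset.sum_const, nsmul_eq_mul]
    _ ≤ (d : ℝ) * blockMax A := mul_le_mul_of_nonneg_right hcard (blockMax_nonneg A)

end Sup


variable {p M : ℕ}

lemma frobG_hasSum_le {α β : Type*} [Fintype α] [Fintype β]
    {w : ℕ → Matrix α β ℝ} {W : Matrix α β ℝ} (h : HasSum w W)
    {c : ℕ → ℝ} (hc : ∀ s, frobG (w s) ≤ c s) (hsc : Summable c) :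
    frobG W ≤ ∑' s, c s := by
  refine le_of_tendsto ((frobG_continuous.continuousAt (x := W)).tendsto.comp h) ?_
  filter_upwards with F
  calc frobG (∑ s ∈ F, w s) ≤ ∑ s ∈ F, frobG (w s) := frobG_sum_le _ _
    _ ≤ ∑ s ∈ F, c s := Finset.sum_le_sum fun s _ => hc s
    _ ≤ ∑' s, c s := Summable.sum_le_tsum F (fun s _ => le_trans (frobG_nonneg _) (hc s)) hsc

lemma blk_hasSum {w : ℕ → Matrix (Fin p × Fin M) (Fin p × Fin M) ℝ}
    {W : Matrix (Fin p × Fin M) (Fin p × Fin M) ℝ} (h : HasSum w W) (j l : Fin p) :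
    HasSum (fun s => blk (w s) j l) (blk W j l) := by
  have he : ∀ q q', HasSum (fun s => w s q q') (W q q') := by
    intro q q'
    exact Pi.hasSum.mp (Pi.hasSum.mp h q) q'
  refine Pi.hasSum.mpr ?_; intro a; refine Pi.hasSum.mpr ?_; intro b
  exact he (j, a) (l, b)

lemma blockOne_hasSum_le [Nonempty (Fin p)]
    {w : ℕ → Matrix (Fin p × Fin M) (Fin p × Fin M) ℝ}
    {W : Matrix (Fin p × Fin M) (Fin p × Fin M) ℝ} (h : HasSum w W)
    {c : ℕ → ℝ} (hc : ∀ s, blockOne (w s) ≤ c s) (hsc : Summable c) :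
    blockOne W ≤ ∑' s, c s := by
  apply blockOne_le
  intro l
  have hfs : ∀ j : Fin p, Summable (fun s => frobG (blk (w s) j l)) := fun j =>
    hsc.of_nonneg_of_le (fun s => frobG_nonneg _)
      (fun s => le_trans (frob_le_blockOne (w s) j l) (hc s))
  calc ∑ j, frobG (blk W j l)
      ≤ ∑ j, ∑' s, frobG (blk (w s) j l) :=
        Finset.sum_le_sum fun j _ =>
          frobG_hasSum_le (blk_hasSum h j l) (fun s => le_rfl) (hfs j)
    _ = ∑' s, ∑ j, frobG (blk (w s) j l) :=
        (Summable.tsum_finsetSum (fun j _ => hfs j)).symm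
    _ ≤ ∑' s, c s := by
        refine Summable.tsum_le_tsum (fun s => le_trans (sum_col_le_blockOne (w s) l) (hc s)) ?_ hsc
        exact summable_sum fun j _ => hfs j


lemma aux_ring {R : Type*} [Ring R] {X J : R} (h : (1 + X) * J = 1) :
    J - 1 + X = X * X * J := by
  have h' : J + X * J = 1 := by rw [add_mul, one_mul] at h; exact h
  have hXJ : X * J = 1 - J := eq_sub_of_add_eq' h'
  rw [mul_assoc, hXJ, mul_sub, mul_one, hXJ]
  abel


set_option maxHeartbeats 2000000 in
/-- Lemma 6, remainder part: under the block-sparsity and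
smallness conditions on `Δ`, `Ω₀ + Δ` is invertible, the remainder
`R(Δ) = (Ω₀+Δ)⁻¹ − Ω₀⁻¹ + Ω₀⁻¹ Δ Ω₀⁻¹` equals `Ω₀⁻¹ Δ Ω₀⁻¹ Δ J Ω₀⁻¹` with
`J = Σ_s (−1)^s (Ω₀⁻¹Δ)^s`, and
`‖R(Δ)‖_max^(M) ≤ (3/2) C_Σ³ d (‖Δ‖_max^(M))²`. -/
theorem statement_18 {p M : ℕ} (hp : 1 ≤ p) (hM : 1 ≤ M)
    (Ω₀ : Matrix (Fin p × Fin M) (Fin p × Fin M) ℝ) (hΩ₀ : Ω₀.PosDef)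
    (d : ℕ) (hd : 1 ≤ d)
    (Δ : Matrix (Fin p × Fin M) (Fin p × Fin M) ℝ) (hΔs : Δ.IsSymm)
    (hΔd : ∀ j : Fin p, {l : Fin p | blk Δ j l ≠ 0}.ncard ≤ d)
    (hsmall : blockMax Δ < 1 / (3 * blockInfty Ω₀⁻¹ * d)) :
    IsUnit (Ω₀ + Δ) ∧
    ∃ J : Matrix (Fin p × Fin M) (Fin p × Fin M) ℝ,
      HasSum (fun s : ℕ => (-1 : ℝ) ^ s • (Ω₀⁻¹ * Δ) ^ s) J ∧
      (Ω₀ + Δ)⁻¹ - Ω₀⁻¹ + Ω₀⁻¹ * Δ * Ω₀⁻¹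
        = Ω₀⁻¹ * Δ * Ω₀⁻¹ * Δ * J * Ω₀⁻¹ ∧
      blockMax ((Ω₀ + Δ)⁻¹ - Ω₀⁻¹ + Ω₀⁻¹ * Δ * Ω₀⁻¹)
        ≤ 3 / 2 * blockInfty Ω₀⁻¹ ^ 3 * (d : ℝ) * blockMax Δ ^ 2 := by

  haveI : Nonempty (Fin p) := ⟨⟨0, hp⟩⟩
  haveI : Nonempty (Fin M) := ⟨⟨0, hM⟩⟩
  classical
  have hdet : IsUnit Ω₀.det := isUnit_iff_ne_zero.mpr hΩ₀.det_pos.ne'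
  have hΩB : Ω₀ * Ω₀⁻¹ = 1 := Matrix.mul_nonsing_inv Ω₀ hdet
  set C := blockInfty Ω₀⁻¹ with hCdef
  set ε := blockMax Δ with hεdef
  set r := C * ((d : ℝ) * ε) with hrdef
  have hd' : (0 : ℝ) < (d : ℝ) := by exact_mod_cast Nat.lt_of_lt_of_le Nat.zero_lt_one hd
  have hε0 : 0 ≤ ε := blockMax_nonneg Δ
  have hCd : 0 < 3 * C * (d : ℝ) := by
    by_contra h
    push_neg at h
    have := one_div_nonpos.mpr h
    linarith
  have hC : 0 < C := by nlinarith
  have hεlt : ε * (3 * C * (d : ℝ)) < 1 := (lt_div_iff₀ hCd).mp hsmall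
  have hr3 : r < 1 / 3 := by
    have h3r : 3 * r = ε * (3 * C * (d : ℝ)) := by rw [hrdef]; ring
    linarith
  have hr0 : 0 ≤ r :=
    mul_nonneg hC.le (mul_nonneg hd'.le hε0)
  have hr1 : r < 1 := by linarith
  -- symmetry facts
  have hBsym : (Ω₀⁻¹)ᵀ = Ω₀⁻¹ := by
    have h1 : (Ω₀⁻¹).IsHermitian := hΩ₀.1.inv
    ext q q'
    have := congrFun (congrFun h1 q) q'
    simpa using this
  have hΔt : Δᵀ = Δ := hΔs
  have hBone : blockOne Ω₀⁻¹ = C := blockOne_eq_blockInfty hBsym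
  have hΔinf : blockInfty Δ ≤ (d : ℝ) * ε := blockInfty_le (sum_row_le_of_sparse hΔd)
  have hΔone : blockOne Δ ≤ (d : ℝ) * ε := by
    rw [blockOne_eq_blockInfty hΔt]; exact hΔinf
  have hXinf : blockInfty (Ω₀⁻¹ * Δ) ≤ r :=
    (blockInfty_mul_le _ _).trans
      (by rw [hrdef]; exact mul_le_mul_of_nonneg_left hΔinf hC.le)
  have hXone : blockOne (Ω₀⁻¹ * Δ) ≤ r :=
    (blockOne_mul_le _ _).trans
      (by rw [hrdef, hBone]; exact mul_le_mul_of_nonneg_left hΔone hC.le)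
  have hYinf : blockInfty (-(Ω₀⁻¹ * Δ)) ≤ r := by rw [blockInfty_neg]; exact hXinf
  have hYone : blockOne (-(Ω₀⁻¹ * Δ)) ≤ r := by rw [blockOne_neg]; exact hXone
  -- geometric bounds on powers
  set K := blockInfty (1 : Matrix (Fin p × Fin M) (Fin p × Fin M) ℝ) with hKdef
  have hK0 : 0 ≤ K := blockInfty_nonneg _
  have hgK : ∀ s : ℕ, blockInfty ((-(Ω₀⁻¹ * Δ)) ^ s) ≤ K * r ^ s := by
    intro s
    induction s with
    | zero => simp [hKdef]
    | succ s ih =>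
      calc blockInfty ((-(Ω₀⁻¹ * Δ)) ^ (s + 1))
          = blockInfty ((-(Ω₀⁻¹ * Δ)) ^ s * (-(Ω₀⁻¹ * Δ))) := by rw [pow_succ]
        _ ≤ blockInfty ((-(Ω₀⁻¹ * Δ)) ^ s) * blockInfty (-(Ω₀⁻¹ * Δ)) :=
            blockInfty_mul_le _ _
        _ ≤ (K * r ^ s) * r :=
            mul_le_mul ih hYinf (blockInfty_nonneg _) (mul_nonneg hK0 (pow_nonneg hr0 s))
        _ = K * r ^ (s + 1) := by ring
  have hsumK : Summable (fun s : ℕ => K * r ^ s) :=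
    (summable_geometric_of_lt_one hr0 hr1).mul_left K
  have eS : ∀ q q' : Fin p × Fin M, Summable (fun s => ((-(Ω₀⁻¹ * Δ)) ^ s) q q') := by
    intro q q'
    refine Summable.of_norm_bounded hsumK (fun s => ?_)
    rw [Real.norm_eq_abs]
    exact (abs_entry_le_blockInfty _ q q').trans (hgK s)
  -- the sum J
  set J : Matrix (Fin p × Fin M) (Fin p × Fin M) ℝ :=
    fun q q' => ∑' s, ((-(Ω₀⁻¹ * Δ)) ^ s) q q' with hJdef
  have hJ : HasSum (fun s => (-(Ω₀⁻¹ * Δ)) ^ s) J := by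
    refine Pi.hasSum.mpr ?_; intro q; refine Pi.hasSum.mpr ?_; intro q'
    exact (eS q q').hasSum
  have hgoalsum : HasSum (fun s : ℕ => (-1 : ℝ) ^ s • (Ω₀⁻¹ * Δ) ^ s) J := by
    have hfun : (fun s : ℕ => (-1 : ℝ) ^ s • (Ω₀⁻¹ * Δ) ^ s)
        = fun s => (-(Ω₀⁻¹ * Δ)) ^ s := by
      funext s
      rw [← neg_one_smul ℝ (Ω₀⁻¹ * Δ), smul_pow]
    rw [hfun]
    exact hJ
  -- telescoping to get (1 + X) * J = 1
  have hshift : HasSum (fun s => (-(Ω₀⁻¹ * Δ)) ^ (s + 1)) (J - 1) := by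
    rw [hasSum_nat_add_iff 1]
    simpa using hJ
  have htel : HasSum (fun s => (-(Ω₀⁻¹ * Δ)) ^ s - (-(Ω₀⁻¹ * Δ)) ^ (s + 1))
      (1 : Matrix (Fin p × Fin M) (Fin p × Fin M) ℝ) := by
    have := hJ.sub hshift
    simpa using this
  have hmul : HasSum (fun s => (1 + Ω₀⁻¹ * Δ) * (-(Ω₀⁻¹ * Δ)) ^ s)
      ((1 + Ω₀⁻¹ * Δ) * J) :=
    hJ.map (AddMonoidHom.mulLeft (1 + Ω₀⁻¹ * Δ))
      (continuous_const.matrix_mul continuous_id)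
  have h1J : (1 + Ω₀⁻¹ * Δ) * J = 1 := by
    have hfun : (fun s => (1 + Ω₀⁻¹ * Δ) * (-(Ω₀⁻¹ * Δ)) ^ s)
        = fun s => (-(Ω₀⁻¹ * Δ)) ^ s - (-(Ω₀⁻¹ * Δ)) ^ (s + 1) := by
      funext s
      rw [add_mul, one_mul, pow_succ', neg_mul, sub_neg_eq_add]
    rw [hfun] at hmul
    exact hmul.unique htel
  -- invertibility
  have hfact : Ω₀ + Δ = Ω₀ * (1 + Ω₀⁻¹ * Δ) := by
    rw [mul_add, mul_one, ← mul_assoc, hΩB, one_mul]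
  have hunit1X : IsUnit (1 + Ω₀⁻¹ * Δ) := by
    apply (Matrix.isUnit_iff_isUnit_det _).mpr
    apply IsUnit.of_mul_eq_one J.det
    rw [← Matrix.det_mul, h1J, Matrix.det_one]
  have hunit : IsUnit (Ω₀ + Δ) := by
    rw [hfact]
    exact ((Matrix.isUnit_iff_isUnit_det _).mpr hdet).mul hunit1X
  have hinv : (Ω₀ + Δ)⁻¹ = J * Ω₀⁻¹ := by
    rw [hfact, Matrix.mul_inv_rev, Matrix.inv_eq_right_inv h1J]
  -- the identity
  have hident : (Ω₀ + Δ)⁻¹ - Ω₀⁻¹ + Ω₀⁻¹ * Δ * Ω₀⁻¹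
      = Ω₀⁻¹ * Δ * Ω₀⁻¹ * Δ * J * Ω₀⁻¹ := by
    rw [hinv]
    have e1 : J * Ω₀⁻¹ - Ω₀⁻¹ + Ω₀⁻¹ * Δ * Ω₀⁻¹
        = (J - 1 + Ω₀⁻¹ * Δ) * Ω₀⁻¹ := by noncomm_ring
    have e2 : Ω₀⁻¹ * Δ * Ω₀⁻¹ * Δ * J * Ω₀⁻¹
        = ((Ω₀⁻¹ * Δ) * (Ω₀⁻¹ * Δ) * J) * Ω₀⁻¹ := by noncomm_ring
    rw [e1, e2, aux_ring h1J]
  refine ⟨hunit, J, hgoalsum, hident, ?_⟩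
  -- the norm bound
  rw [hident]
  -- bound blockOne of Δ * (J * Ω₀⁻¹) via the series
  have hb : ∀ s : ℕ, blockOne ((-(Ω₀⁻¹ * Δ)) ^ s * Ω₀⁻¹) ≤ C * r ^ s := by
    intro s
    induction s with
    | zero => simp [hBone]
    | succ s ih =>
      have hstep : (-(Ω₀⁻¹ * Δ)) ^ (s + 1) * Ω₀⁻¹
          = (-(Ω₀⁻¹ * Δ)) * ((-(Ω₀⁻¹ * Δ)) ^ s * Ω₀⁻¹) := by
        rw [pow_succ', mul_assoc]
      calc blockOne ((-(Ω₀⁻¹ * Δ)) ^ (s + 1) * Ω₀⁻¹)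
          = blockOne ((-(Ω₀⁻¹ * Δ)) * ((-(Ω₀⁻¹ * Δ)) ^ s * Ω₀⁻¹)) := by rw [hstep]
        _ ≤ blockOne (-(Ω₀⁻¹ * Δ)) * blockOne ((-(Ω₀⁻¹ * Δ)) ^ s * Ω₀⁻¹) :=
            blockOne_mul_le _ _
        _ ≤ r * (C * r ^ s) :=
            mul_le_mul hYone ih (blockOne_nonneg _) hr0
        _ = C * r ^ (s + 1) := by ring
  have hc : ∀ s : ℕ, blockOne (Δ * ((-(Ω₀⁻¹ * Δ)) ^ s * Ω₀⁻¹))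
      ≤ ((d : ℝ) * ε * C) * r ^ s := by
    intro s
    calc blockOne (Δ * ((-(Ω₀⁻¹ * Δ)) ^ s * Ω₀⁻¹))
        ≤ blockOne Δ * blockOne ((-(Ω₀⁻¹ * Δ)) ^ s * Ω₀⁻¹) := blockOne_mul_le _ _
      _ ≤ ((d : ℝ) * ε) * (C * r ^ s) :=
          mul_le_mul hΔone (hb s) (blockOne_nonneg _)
            (mul_nonneg hd'.le hε0)
      _ = ((d : ℝ) * ε * C) * r ^ s := by ring
  have hsumc : Summable (fun s : ℕ => ((d : ℝ) * ε * C) * r ^ s) :=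
    (summable_geometric_of_lt_one hr0 hr1).mul_left _
  have hW : HasSum (fun s => Δ * ((-(Ω₀⁻¹ * Δ)) ^ s * Ω₀⁻¹)) (Δ * (J * Ω₀⁻¹)) := by
    have h1 : HasSum (fun s => (-(Ω₀⁻¹ * Δ)) ^ s * Ω₀⁻¹) (J * Ω₀⁻¹) :=
      hJ.map (AddMonoidHom.mulRight Ω₀⁻¹)
        (continuous_id.matrix_mul continuous_const)
    exact h1.map (AddMonoidHom.mulLeft Δ) (continuous_const.matrix_mul continuous_id)
  have hWone : blockOne (Δ * (J * Ω₀⁻¹)) ≤ ((d : ℝ) * ε * C) * (3 / 2) := by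
    have := blockOne_hasSum_le hW hc hsumc
    have htsum : ∑' s : ℕ, ((d : ℝ) * ε * C) * r ^ s = ((d : ℝ) * ε * C) * (1 - r)⁻¹ := by
      rw [tsum_mul_left, tsum_geometric_of_lt_one hr0 hr1]
    have hinvr : (1 - r)⁻¹ ≤ 3 / 2 := by
      have h23 : (2 / 3 : ℝ) ≤ 1 - r := by linarith
      have h0 := one_div_le_one_div_of_le (by norm_num : (0:ℝ) < 2/3) h23
      calc (1 - r)⁻¹ = 1 / (1 - r) := (one_div _).symm
        _ ≤ 1 / (2 / 3 : ℝ) := h0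
        _ = 3 / 2 := by norm_num
    calc blockOne (Δ * (J * Ω₀⁻¹)) ≤ ((d : ℝ) * ε * C) * (1 - r)⁻¹ := this.trans_eq htsum
      _ ≤ ((d : ℝ) * ε * C) * (3 / 2) :=
          mul_le_mul_of_nonneg_left hinvr
            (mul_nonneg (mul_nonneg hd'.le hε0) hC.le)
  have hassoc : Ω₀⁻¹ * Δ * Ω₀⁻¹ * Δ * J * Ω₀⁻¹
      = (Ω₀⁻¹ * Δ) * (Ω₀⁻¹ * (Δ * (J * Ω₀⁻¹))) := by noncomm_ring
  rw [hassoc]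
  have hfullone : blockOne (Ω₀⁻¹ * (Δ * (J * Ω₀⁻¹))) ≤ C * (((d : ℝ) * ε * C) * (3 / 2)) :=
    (blockOne_mul_le _ _).trans
      (by rw [hBone]; exact mul_le_mul_of_nonneg_left hWone hC.le)
  have hmax1 : blockMax (Ω₀⁻¹ * Δ) ≤ C * ε := blockMax_mul_le_left _ _
  calc blockMax ((Ω₀⁻¹ * Δ) * (Ω₀⁻¹ * (Δ * (J * Ω₀⁻¹))))
      ≤ blockMax (Ω₀⁻¹ * Δ) * blockOne (Ω₀⁻¹ * (Δ * (J * Ω₀⁻¹))) :=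
        blockMax_mul_le_right _ _
    _ ≤ (C * ε) * (C * (((d : ℝ) * ε * C) * (3 / 2))) :=
        mul_le_mul hmax1 hfullone (blockOne_nonneg _)
          (mul_nonneg hC.le hε0)
    _ = 3 / 2 * C ^ 3 * (d : ℝ) * ε ^ 2 := by ring

end JF
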